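/- If f ∈ L^p_loc(ℝ) with p > 1 and b(x) = f(x₁) (a function on ℝⁿ depending only on the first coordinate), then b satisfies the annular Dini–Kato condition: for α = p there exists σ in the Dini class such that sup_x ∫_{r/2 ≤ |x−y| ≤ r} |b(y)|^α / |x−y|^{n−α} dy ≤ σ(r)^α for all small r > 0. -/

import Mathlib

open MeasureTheory Real Set Filter Metric
noncomputable section

/-- Euclidean n-space. -/
abbrev Euc (n : ℕ) := EuclideanSpace ℝ (Fin n)

/-- The Dini class 𝒟: increasing σ with σ(t)/t decreasing and integrable on (0,1]. -/
def DiniClass (σ : ℝ → ℝ) : Prop :=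
  (∀ t ∈ Set.Ioc (0:ℝ) 1, 0 ≤ σ t) ∧
  MonotoneOn σ (Set.Ioc (0:ℝ) 1) ∧
  AntitoneOn (fun t => σ t / t) (Set.Ioc (0:ℝ) 1) ∧
  MeasureTheory.IntegrableOn (fun t => σ t / t) (Set.Ioc (0:ℝ) 1)

/-- The annulus {y : r/2 ≤ |x − y| ≤ r}. -/
def Annulus (n : ℕ) (x : Euc n) (r : ℝ) : Set (Euc n) :=
  {y | r / 2 ≤ dist x y ∧ dist x y ≤ r}

lemma coord_le_dist {n : ℕ} (x y : Euc n) (i : Fin n) : |x i - y i| ≤ dist x y := by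
  rw [EuclideanSpace.dist_eq, ← Real.dist_eq]
  calc dist (x i) (y i) = Real.sqrt (dist (x i) (y i) ^ 2) := (Real.sqrt_sq dist_nonneg).symm
    _ ≤ _ := Real.sqrt_le_sqrt (Finset.single_le_sum (f := fun j => dist (x j) (y j) ^ 2)
        (fun j _ => sq_nonneg _) (Finset.mem_univ i))

lemma volume_box {n : ℕ} (s : Fin n → Set ℝ) (hs : ∀ i, MeasurableSet (s i)) :
    volume {y : Euc n | ∀ i, y i ∈ s i} = ∏ i, volume (s i) := by
  have h1 : {y : Euc n | ∀ i, y i ∈ s i}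
      = (MeasurableEquiv.toLp 2 (Fin n → ℝ)).symm ⁻¹' (Set.univ.pi s) := by
    ext y; simp [Set.mem_pi]
  rw [h1, (EuclideanSpace.volume_preserving_symm_measurableEquiv_toLp (Fin n)).measure_preimage
    (MeasurableSet.univ_pi hs).nullMeasurableSet]
  exact volume_pi_pi s

lemma measurable_rpow_const (c : ℝ) : Measurable fun t : ℝ => t ^ c := by measurability

lemma diniClass_rpow (A θ : ℝ) (hA : 0 ≤ A) (hθ0 : 0 < θ) (hθ1 : θ < 1) :
    DiniClass (fun t => A * t ^ θ) := by
  have key : ∀ t : ℝ, t ≠ 0 → A * t ^ θ / t = A * t ^ (θ - 1) := by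
    intro t ht
    rw [Real.rpow_sub_one ht, mul_div_assoc]
  refine ⟨?_, ?_, ?_, ?_⟩
  · intro t ht
    exact mul_nonneg hA (Real.rpow_nonneg ht.1.le _)
  · intro s hs t ht hst
    exact mul_le_mul_of_nonneg_left (Real.rpow_le_rpow hs.1.le hst hθ0.le) hA
  · intro s hs t ht hst
    show A * t ^ θ / t ≤ A * s ^ θ / s
    rw [key s hs.1.ne', key t ht.1.ne']
    exact mul_le_mul_of_nonneg_left
      (Real.rpow_le_rpow_of_nonpos hs.1 hst (by linarith)) hA
  · have h1 : IntervalIntegrable (fun t : ℝ => t ^ (θ - 1)) volume 0 1 :=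
      intervalIntegral.intervalIntegrable_rpow' (by linarith)
    have h2 : IntegrableOn (fun t : ℝ => A * t ^ (θ - 1)) (Set.Ioc (0:ℝ) 1) := by
      have := (h1.const_mul A).1
      simpa using this
    exact h2.congr_fun (fun t ht => (key t ht.1.ne').symm) measurableSet_Ioc

set_option maxHeartbeats 1000000 in
set_option maxRecDepth 8000 in
/-- if f ∈ L^p_loc(ℝ), p > 1, and b(x) = f(x₁) depends on the first
coordinate only, then b satisfies the annular Dini–Kato condition with α = p (uniformly
over x in a bounded set). -/
theorem one_variable_drift_dini (n : ℕ) (hn : 2 ≤ n)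
    (p : ℝ) (hp : 1 < p) (f : ℝ → ℝ) (hfm : Measurable f)
    (hf : ∀ R > (0:ℝ), MemLp f (ENNReal.ofReal p) (volume.restrict (Set.Icc (-R) R)))
    (Ω : Set (Euc n)) (hΩb : Bornology.IsBounded Ω) :
    ∃ σ : ℝ → ℝ, DiniClass σ ∧ ∃ r₀ > (0:ℝ), ∀ r ∈ Set.Ioc (0:ℝ) r₀, ∀ x ∈ Ω,
      (∫ y in Annulus n x r, |f (y ⟨0, by omega⟩)| ^ p / dist x y ^ ((n:ℝ) - p)) ≤ σ r ^ p := by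
  have hp0 : (0:ℝ) < p := by linarith
  obtain ⟨R, hR⟩ := hΩb.subset_closedBall 0
  set R' : ℝ := max R 0 + 1 with hR'def
  have hR'pos : 0 < R' := by positivity
  -- the L^p mass on [-R', R']
  set g : ℝ → ℝ := fun t => |f t| ^ p with hgdef
  have hgm : Measurable g := by measurability
  have hg0 : ∀ t, 0 ≤ g t := fun t => Real.rpow_nonneg (abs_nonneg _) _
  set L : ENNReal := ∫⁻ t in Set.Icc (-R') R', ENNReal.ofReal (g t) with hLdef
  have hL : L < ⊤ := by
    have hint : Integrable (fun t => ‖f t‖ ^ (ENNReal.ofReal p).toReal)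
        (volume.restrict (Set.Icc (-R') R')) :=
      (hf R' hR'pos).integrable_norm_rpow (by simp [hp0.le]; linarith) (by simp)
    have h2 : (∫⁻ t in Set.Icc (-R') R', ↑‖‖f t‖ ^ (ENNReal.ofReal p).toReal‖₊) < ⊤ := hint.2
    refine lt_of_le_of_lt (le_of_eq ?_) h2
    refine lintegral_congr fun t => ?_
    rw [ENNReal.toReal_ofReal hp0.le, ← Real.enorm_eq_ofReal (hg0 t)]
    congr 1
  set M : ℝ := L.toReal with hMdef
  have hM0 : 0 ≤ M := ENNReal.toReal_nonneg
  have hLM : L = ENNReal.ofReal M := (ENNReal.ofReal_toReal hL.ne).symm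
  set C : ℝ := 2 ^ (2*(n:ℝ)) * M with hCdef
  have hC0 : 0 ≤ C := by positivity
  set A : ℝ := max 1 C with hAdef
  have hA1 : 1 ≤ A := le_max_left _ _
  have hA0 : 0 ≤ A := by linarith
  set θ : ℝ := (p-1)/(2*p) with hθdef
  have hθ0 : 0 < θ := div_pos (by linarith) (by linarith)
  have hθ1 : θ < 1 := by
    rw [hθdef, div_lt_one (by linarith)]; linarith
  refine ⟨fun t => A * t ^ θ, diniClass_rpow A θ hA0 hθ0 hθ1, 1, one_pos, ?_⟩
  intro r hr x hx
  have hr0 : 0 < r := hr.1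
  have hr1 : r ≤ 1 := hr.2
  set i0 : Fin n := ⟨0, by omega⟩ with hi0def
  set pr : Euc n → ℝ := fun y => y i0 with hprdef
  have hpr : Measurable pr :=
    (measurable_pi_apply i0).comp (MeasurableEquiv.toLp 2 (Fin n → ℝ)).symm.measurable
  set I : Set ℝ := Set.Icc (x i0 - r) (x i0 + r) with hIdef
  have hxR : |x i0| ≤ max R 0 := by
    have h1 := coord_le_dist x 0 i0
    have h2 : dist x 0 ≤ R := by
      have := hR hx; rwa [Metric.mem_closedBall] at this
    have h0 : (0 : Euc n) i0 = 0 := rfl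
    rw [h0, sub_zero] at h1
    exact le_trans (h1.trans h2) (le_max_left _ _)
  have hIsub : I ⊆ Set.Icc (-R') R' := by
    have := abs_le.mp hxR
    apply Set.Icc_subset_Icc <;> [linarith; linarith]
  have hAnn : MeasurableSet (Annulus n x r) := by
    have hc : Continuous fun y : Euc n => dist x y := continuous_const.dist continuous_id
    exact ((isClosed_le continuous_const hc).inter (isClosed_le hc continuous_const)).measurableSet
  -- the map measure bound
  have hmap : Measure.map pr (volume.restrict (Annulus n x r)) ≤
      (ENNReal.ofReal (2*r) ^ (n-1)) • volume.restrict I := by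
    rw [Measure.le_iff]
    intro s hs
    rw [Measure.map_apply hpr hs, Measure.restrict_apply (hpr hs)]
    classical
    set s' : Fin n → Set ℝ := fun i => if i = i0 then I ∩ s else Set.Icc (x i - r) (x i + r)
      with hs'def
    have hsub : pr ⁻¹' s ∩ Annulus n x r ⊆ {y : Euc n | ∀ i, y i ∈ s' i} := by
      rintro y ⟨hys, hyA⟩ i
      have hdr : |x i - y i| ≤ r := (coord_le_dist x y i).trans hyA.2
      rw [abs_sub_le_iff] at hdr
      by_cases hi : i = i0
      · subst hi
        simp only [hs'def, if_pos rfl]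
        exact ⟨⟨by linarith [hdr.1, hdr.2], by linarith [hdr.1, hdr.2]⟩, hys⟩
      · simp only [hs'def, if_neg hi]
        exact ⟨by linarith [hdr.1, hdr.2], by linarith [hdr.1, hdr.2]⟩
    have hmeas' : ∀ i, MeasurableSet (s' i) := by
      intro i
      simp only [hs'def]
      by_cases hi : i = i0
      · rw [if_pos hi]; exact measurableSet_Icc.inter hs
      · rw [if_neg hi]; exact measurableSet_Icc
    calc volume (pr ⁻¹' s ∩ Annulus n x r) ≤ volume {y : Euc n | ∀ i, y i ∈ s' i} :=
          measure_mono hsub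
      _ = ∏ i, volume (s' i) := volume_box s' hmeas'
      _ = volume (s' i0) * ∏ i ∈ Finset.univ.erase i0, volume (s' i) :=
          (Finset.mul_prod_erase _ _ (Finset.mem_univ i0)).symm
      _ ≤ (ENNReal.ofReal (2*r) ^ (n-1)) • (volume.restrict I) s := by
          have h1 : ∀ i ∈ Finset.univ.erase i0, volume (s' i) = ENNReal.ofReal (2*r) := by
            intro i hi
            rw [hs'def]
            simp only [if_neg (Finset.mem_erase.mp hi).1]
            rw [Real.volume_Icc]
            congr 1; ring
          have hs0 : s' i0 = I ∩ s := by simp only [hs'def, if_pos rfl]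
          rw [Finset.prod_congr rfl h1, Finset.prod_const, Finset.card_erase_of_mem
            (Finset.mem_univ i0), Finset.card_univ, Fintype.card_fin, hs0]
          simp only [Measure.smul_apply, smul_eq_mul, Measure.restrict_apply hs,
            Set.inter_comm s I]
          rw [mul_comm]
  -- pointwise bound on the annulus
  set K : ℝ := 2 ^ ((n:ℝ)+1) * r ^ (p - n) with hKdef
  have hK0 : 0 ≤ K := by positivity
  have hpoint : ∀ y ∈ Annulus n x r, g (pr y) / dist x y ^ ((n:ℝ) - p) ≤ K * g (pr y) := by
    intro y hy
    have hd2 : r/2 ≤ dist x y := hy.1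
    have hd3 : dist x y ≤ r := hy.2
    have hdpos : 0 < dist x y := lt_of_lt_of_le (by linarith) hd2
    have hrw : g (pr y) / dist x y ^ ((n:ℝ) - p) = g (pr y) * dist x y ^ (p - (n:ℝ)) := by
      rw [div_eq_mul_inv, ← Real.rpow_neg dist_nonneg, neg_sub]
    rw [hrw, mul_comm K _]
    refine mul_le_mul_of_nonneg_left ?_ (hg0 _)
    have h2n : (1:ℝ) ≤ 2 ^ ((n:ℝ)+1) := by
      rw [show (1:ℝ) = 2 ^ (0:ℝ) by rw [Real.rpow_zero]]
      exact Real.rpow_le_rpow_of_exponent_le one_le_two (by positivity)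
    rcases le_total p n with hpn | hpn
    · have h1 : dist x y ^ (p - (n:ℝ)) ≤ (r/2) ^ (p - (n:ℝ)) :=
        Real.rpow_le_rpow_of_nonpos (by linarith) hd2 (by linarith)
      have h2 : (r/2) ^ (p - (n:ℝ)) = r ^ (p - (n:ℝ)) / 2 ^ (p - (n:ℝ)) :=
        Real.div_rpow hr0.le (by norm_num : (0:ℝ) ≤ 2) (p - (n:ℝ))
      have h3 : r ^ (p - (n:ℝ)) / 2 ^ (p - (n:ℝ)) = r ^ (p - (n:ℝ)) * 2 ^ ((n:ℝ) - p) := by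
        rw [div_eq_mul_inv, ← Real.rpow_neg (by norm_num), neg_sub]
      have h4 : (2:ℝ) ^ ((n:ℝ) - p) ≤ 2 ^ ((n:ℝ)+1) :=
        Real.rpow_le_rpow_of_exponent_le one_le_two (by linarith)
      calc dist x y ^ (p - (n:ℝ)) ≤ r ^ (p - (n:ℝ)) * 2 ^ ((n:ℝ) - p) := by
            rw [← h3, ← h2]; exact h1
        _ ≤ r ^ (p - (n:ℝ)) * 2 ^ ((n:ℝ)+1) :=
            mul_le_mul_of_nonneg_left h4 (Real.rpow_nonneg hr0.le _)
        _ = K := by rw [hKdef]; ring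
    · have h1 : dist x y ^ (p - (n:ℝ)) ≤ r ^ (p - (n:ℝ)) :=
        Real.rpow_le_rpow dist_nonneg hd3 (by linarith)
      calc dist x y ^ (p - (n:ℝ)) ≤ r ^ (p - (n:ℝ)) := h1
        _ ≤ K := by
            rw [hKdef]
            nlinarith [Real.rpow_nonneg hr0.le (p - (n:ℝ))]
  -- now the lintegral chain
  set G : ℝ → ENNReal := fun t => ENNReal.ofReal (g t) with hGdef
  have hGm : Measurable G := hgm.ennreal_ofReal
  have hstep1 : ∫⁻ y in Annulus n x r, ENNReal.ofReal (g (pr y) / dist x y ^ ((n:ℝ) - p)) ≤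
      ENNReal.ofReal K * ∫⁻ y in Annulus n x r, G (pr y) := by
    rw [← lintegral_const_mul _ (show Measurable fun y : Euc n => G (pr y) from hGm.comp hpr)]
    refine setLIntegral_mono ((show Measurable fun y : Euc n => G (pr y) from hGm.comp hpr).const_mul _) ?_
    intro y hy
    calc ENNReal.ofReal (g (pr y) / dist x y ^ ((n:ℝ) - p))
        ≤ ENNReal.ofReal (K * g (pr y)) := ENNReal.ofReal_le_ofReal (hpoint y hy)
      _ = ENNReal.ofReal K * G (pr y) := ENNReal.ofReal_mul hK0
  have hstep2 : ∫⁻ y in Annulus n x r, G (pr y) ≤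
      ENNReal.ofReal (2*r) ^ (n-1) * ENNReal.ofReal M := by
    calc ∫⁻ y in Annulus n x r, G (pr y)
        = ∫⁻ t, G t ∂(Measure.map pr (volume.restrict (Annulus n x r))) :=
          (lintegral_map hGm hpr).symm
      _ ≤ ∫⁻ t, G t ∂((ENNReal.ofReal (2*r) ^ (n-1)) • volume.restrict I) :=
          lintegral_mono' hmap le_rfl
      _ = ENNReal.ofReal (2*r) ^ (n-1) * ∫⁻ t in I, G t := lintegral_smul_measure _ _
      _ ≤ ENNReal.ofReal (2*r) ^ (n-1) * L := by
          refine mul_le_mul_right ?_ _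
          rw [hLdef]
          exact lintegral_mono_set hIsub
      _ = ENNReal.ofReal (2*r) ^ (n-1) * ENNReal.ofReal M := by rw [hLM]
  -- real arithmetic: the final bound
  have hfinal : K * ((2*r) ^ (n-1) * M) ≤ (A * r ^ θ) ^ p := by
    have hnat : ((2:ℝ)*r) ^ (n-1) = (2*r) ^ ((n:ℝ) - 1) := by
      rw [← Real.rpow_natCast (2*r) (n-1), Nat.cast_sub (by omega), Nat.cast_one]
    have hsplit : ((2:ℝ)*r) ^ ((n:ℝ) - 1) = 2 ^ ((n:ℝ)-1) * r ^ ((n:ℝ)-1) :=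
      Real.mul_rpow (by norm_num) hr0.le
    have h2sum : (2:ℝ) ^ ((n:ℝ)+1) * 2 ^ ((n:ℝ)-1) = 2 ^ (2*(n:ℝ)) := by
      rw [← Real.rpow_add (by norm_num)]; ring_nf
    have hrsum : r ^ (p - (n:ℝ)) * r ^ ((n:ℝ)-1) = r ^ (p-1) := by
      rw [← Real.rpow_add hr0]; ring_nf
    have hLHS : K * ((2*r) ^ (n-1) * M) = C * r ^ (p-1) := by
      rw [hnat, hsplit, hKdef, hCdef, ← hrsum, ← h2sum]; ring
    have hRHS : (A * r ^ θ) ^ p = A ^ p * r ^ ((p-1)/2) := by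
      have hθp : θ * p = (p-1)/2 := by rw [hθdef]; field_simp
      rw [Real.mul_rpow hA0 (Real.rpow_nonneg hr0.le _), ← Real.rpow_mul hr0.le, hθp]
    rw [hLHS, hRHS]
    have ha0 : 0 ≤ r ^ ((p-1)/2) := Real.rpow_nonneg hr0.le _
    have ha1 : r ^ ((p-1)/2) ≤ 1 := Real.rpow_le_one hr0.le hr1 (by linarith)
    have hCA : C ≤ A ^ p := by
      calc C ≤ A := le_max_right _ _
        _ = A ^ (1:ℝ) := (Real.rpow_one A).symm
        _ ≤ A ^ p := Real.rpow_le_rpow_of_exponent_le hA1 hp.le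
    have hrsplit : r ^ (p-1) = r ^ ((p-1)/2) * r ^ ((p-1)/2) := by
      rw [← Real.rpow_add hr0]; ring_nf
    rw [hrsplit]
    calc C * (r ^ ((p-1)/2) * r ^ ((p-1)/2)) ≤ C * r ^ ((p-1)/2) := by nlinarith [mul_nonneg (mul_nonneg hC0 ha0) (sub_nonneg.mpr ha1)]
      _ ≤ A ^ p * r ^ ((p-1)/2) := mul_le_mul_of_nonneg_right hCA ha0
  -- conclude
  have hσ0 : 0 ≤ (A * r ^ θ) ^ p :=
    Real.rpow_nonneg (mul_nonneg hA0 (Real.rpow_nonneg hr0.le _)) _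
  have hhm : Measurable fun y : Euc n => g (pr y) / dist x y ^ ((n:ℝ) - p) := by
    have hd : Measurable fun y : Euc n => dist x y :=
      (continuous_const.dist continuous_id).measurable
    have hm1 : Measurable fun t : ℝ => t ^ ((n:ℝ) - p) := measurable_rpow_const _
    exact (hgm.comp hpr).div (hm1.comp hd)
  have h0 : 0 ≤ᵐ[volume.restrict (Annulus n x r)]
      fun y : Euc n => g (pr y) / dist x y ^ ((n:ℝ) - p) :=
    ae_of_all _ fun y => div_nonneg (hg0 _) (Real.rpow_nonneg dist_nonneg _)
  show (∫ y in Annulus n x r, g (pr y) / dist x y ^ ((n:ℝ) - p)) ≤ (A * r ^ θ) ^ p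
  rw [integral_eq_lintegral_of_nonneg_ae h0 hhm.aestronglyMeasurable]
  refine ENNReal.toReal_le_of_le_ofReal hσ0 ?_
  calc ∫⁻ y in Annulus n x r, ENNReal.ofReal (g (pr y) / dist x y ^ ((n:ℝ) - p))
      ≤ ENNReal.ofReal K * (ENNReal.ofReal (2*r) ^ (n-1) * ENNReal.ofReal M) :=
        hstep1.trans (mul_le_mul_right hstep2 _)
    _ = ENNReal.ofReal (K * ((2*r) ^ (n-1) * M)) := by
        rw [ENNReal.ofReal_mul hK0, ← ENNReal.ofReal_pow (by positivity),
          ENNReal.ofReal_mul (by positivity),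
          ENNReal.ofReal_mul (show (0:ℝ) ≤ (2*r) ^ (n-1) by positivity)]
    _ ≤ ENNReal.ofReal ((A * r ^ θ) ^ p) := ENNReal.ofReal_le_ofReal hfinal
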